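/- In the Newcomb-with-precommitment environment with ε = 0.01, the two-step values from the empty history of the four policies — signing one-boxer (sign then B₁), signing two-boxer (sign then B₂), refusing one-boxer (not sign then B₁), refusing two-boxer (not sign then B₂) — are: action-evidential and policy-evidential values both equal to 700000, 699000, 990000, 11000 respectively, and causal values 700000, 699000, 500000, 501000 respectively. Hence the refusing one-boxer uniquely maximizes both evidential values (SAEDT and SPEDT refuse the contract and one-box), while the signing one-boxer uniquely maximizes the causal value (SCDT signs the contract and one-boxes). -/

import Mathlib

/-! # A framework for physicalistic sequential decision making

Following Everitt, Leike, Hutter, "Sequential Extensions of Causal and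
Evidential Decision Theory".

An environment model `μ` over hidden states `S`, actions `A`, percepts `E`
with lifetime `m` is given in causally factored form
`μ(s, æ_{1:m}) = μ(s) ∏_i μ(a_i | s, æ_{<i}) μ(e_i | s, æ_{<i} a_i)`.
Histories are lists of action-percept pairs. -/

noncomputable section

variable {S A E : Type*}

/-- The product `∏ μ(a_i | s, æ_{<i}) μ(e_i | s, æ_{<i}a_i)` of the factors along the
continuation `rest` of the history-prefix `pre`. -/
def wSuf (pa : S → List (A × E) → A → ℝ) (pe : S → List (A × E) → A → E → ℝ)
    (s : S) : List (A × E) → List (A × E) → ℝ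
  | _, [] => 1
  | pre, (a, e) :: rest => pa s pre a * pe s pre a e * wSuf pa pe s (pre ++ [(a, e)]) rest

/-- A physicalistic environment model with lifetime `m`: a prior pmf on the hidden state,
together with conditional pmfs for the action and the percept at every time step
(i.e. after every history of length `< m`), which is action-positive. -/
structure Env (S A E : Type*) [Fintype S] [Fintype A] [Fintype E] (m : ℕ) where
  /-- the prior `μ(s)` over the hidden state -/
  prior : S → ℝ
  /-- the action factor `μ(a_t | s, æ_{<t})` -/
  pa : S → List (A × E) → A → ℝ
  /-- the percept factor `μ(e_t | s, æ_{<t}a_t)` -/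
  pe : S → List (A × E) → A → E → ℝ
  prior_nonneg : ∀ s, 0 ≤ prior s
  prior_sum : ∑ s, prior s = 1
  pa_nonneg : ∀ s h a, 0 ≤ pa s h a
  pa_sum : ∀ s (h : List (A × E)), h.length < m → ∑ a, pa s h a = 1
  pe_nonneg : ∀ s h a e, 0 ≤ pe s h a e
  pe_sum : ∀ s (h : List (A × E)) (a : A), h.length < m → ∑ e, pe s h a e = 1
  /-- action-positivity: `μ(æ_{<t} | s) > 0` implies `μ(a_t | s, æ_{<t}) > 0` -/
  action_pos : ∀ s (h : List (A × E)) (a : A), h.length < m →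
    0 < wSuf pa pe s [] h → 0 < pa s h a

variable [Fintype S] [Fintype A] [Fintype E] {m : ℕ}

/-- Event: the trajectory `τ = æ_{1:m}` extends the history `h = æ_{<t}`. -/
def ExtendsH (h : List (A × E)) (τ : Fin m → A × E) : Prop :=
  (List.ofFn τ).take h.length = h

/-- Event: the actions of the trajectory `τ` from (0-based) time `t0` on follow
the deterministic policy `π`. -/
def FollowsFrom (π : List (A × E) → A) (t0 : ℕ) (τ : Fin m → A × E) : Prop :=
  ∀ i : Fin m, t0 ≤ (i : ℕ) → (τ i).1 = π ((List.ofFn τ).take (i : ℕ))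

/-- Event: the action at (0-based) time `k` is `a`. -/
def ActAt (k : ℕ) (a : A) (τ : Fin m → A × E) : Prop :=
  ∀ hk : k < m, (τ ⟨k, hk⟩).1 = a

/-- Event: the percept at (0-based) time `k` is `e`. -/
def PerAt (k : ℕ) (e : E) (τ : Fin m → A × E) : Prop :=
  ∀ hk : k < m, (τ ⟨k, hk⟩).2 = e

namespace Env

/-- The joint probability `μ(s, æ_{<t})`, given directly by the causal factorization. -/
def hw (μ : Env S A E m) (s : S) (h : List (A × E)) : ℝ :=
  μ.prior s * wSuf μ.pa μ.pe s [] h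

/-- The marginal probability `μ(æ_{<t})` of a history. -/
def probH (μ : Env S A E m) (h : List (A × E)) : ℝ := ∑ s, μ.hw s h

/-- The probability `μ(æ_{<t}a_t)` of a history followed by an action. -/
def probHA (μ : Env S A E m) (h : List (A × E)) (a : A) : ℝ :=
  ∑ s, μ.hw s h * μ.pa s h a

/-- The action-evidential conditional `μ(e_t | æ_{<t}a_t)`. -/
def condE (μ : Env S A E m) (h : List (A × E)) (a : A) (e : E) : ℝ :=
  μ.probH (h ++ [(a, e)]) / μ.probHA h a

/-- The posterior `μ(s | æ_{<t})` over the hidden state. -/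
def condS (μ : Env S A E m) (s : S) (h : List (A × E)) : ℝ :=
  μ.hw s h / μ.probH h

/-- The posterior `μ(s | æ_{<t}a_t)` over the hidden state, also conditioning on `a_t`. -/
def condSA (μ : Env S A E m) (s : S) (h : List (A × E)) (a : A) : ℝ :=
  μ.hw s h * μ.pa s h a / μ.probHA h a

/-- The conditional `μ(e_t | s, æ_{<t}a_t)` given the hidden state. -/
def condESA (μ : Env S A E m) (s : S) (h : List (A × E)) (a : A) (e : E) : ℝ :=
  μ.hw s (h ++ [(a, e)]) / (μ.hw s h * μ.pa s h a)

/-! ## Causal interventions -/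

/-- The intervened joint `μ(s, æ_{<t}, e_t | do(a_t := b))`: the action factor at time `t`
is deleted and `a_t` is substituted by `b`. -/
def doJoint (μ : Env S A E m) (s : S) (h : List (A × E)) (b : A) (e : E) : ℝ :=
  μ.hw s h * μ.pe s h b e

/-- `μ(æ_{<t}, e_t | do(a_t := b))`, marginalizing the hidden state. -/
def doNum (μ : Env S A E m) (h : List (A × E)) (b : A) (e : E) : ℝ :=
  ∑ s, μ.doJoint s h b e

/-- `μ(æ_{<t} | do(a_t := b))`, marginalizing the hidden state and the percept `e_t`. -/
def doDen (μ : Env S A E m) (h : List (A × E)) (b : A) : ℝ :=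
  ∑ e, μ.doNum h b e

/-- The causal conditional `μ(e_t | æ_{<t}, do(a_t := b))`. -/
def condDo (μ : Env S A E m) (h : List (A × E)) (b : A) (e : E) : ℝ :=
  μ.doNum h b e / μ.doDen h b

/-- Product of the percept factors along the percepts `es`, all action factors being
deleted and the actions substituted according to the policy `π`:
the intervened conditional `μ(e_{t:k} | s, æ_{<t}, do(a_t := π(æ_{<t}), …))`. -/
def doPE (μ : Env S A E m) (π : List (A × E) → A) (s : S) :
    List (A × E) → List E → ℝ
  | _, [] => 1
  | h, e :: es => μ.pe s h (π h) e * μ.doPE π s (h ++ [(π h, e)]) es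

/-- `μ(æ_{<t}, e_{t:k} | do(a_t := π(æ_{<t}), …, a_m := π(æ_{<m})))` where the percepts
`e_{t:k}` are given by the list `es`. -/
def doPolNum (μ : Env S A E m) (π : List (A × E) → A) (h : List (A × E))
    (es : List E) : ℝ :=
  ∑ s, μ.hw s h * μ.doPE π s h es

/-- `μ(æ_{<t} | do(a_t := π(æ_{<t}), …, a_m := π(æ_{<m})))`, marginalizing all the
intervened percepts `e_{t:m}`. -/
def doPolDen (μ : Env S A E m) (π : List (A × E) → A) (h : List (A × E)) : ℝ :=
  ∑ es : Fin (m - h.length) → E, μ.doPolNum π h (List.ofFn es)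

/-! ## Probabilities of trajectory events -/

open Classical in
/-- The probability of an event `Q` over full trajectories `æ_{1:m}`. -/
def evP (μ : Env S A E m) (Q : (Fin m → A × E) → Prop) : ℝ :=
  ∑ τ : Fin m → A × E, if Q τ then μ.probH (List.ofFn τ) else 0

open Classical in
/-- The joint probability of the hidden state `s` and an event `Q` over full
trajectories `æ_{1:m}`. -/
def evPS (μ : Env S A E m) (s : S) (Q : (Fin m → A × E) → Prop) : ℝ :=
  ∑ τ : Fin m → A × E, if Q τ then μ.hw s (List.ofFn τ) else 0

/-- The policy-evidential conditional `μ(e_t | æ_{<t}, π_{t:m})`, conditioning on the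
event that the history extends `æ_{<t}` and the actions from time `t` to `m` follow `π`. -/
def condPev (μ : Env S A E m) (π : List (A × E) → A) (h : List (A × E)) (e : E) : ℝ :=
  μ.evP (fun τ => ExtendsH h τ ∧ FollowsFrom π h.length τ ∧ PerAt h.length e τ) /
    μ.evP (fun τ => ExtendsH h τ ∧ FollowsFrom π h.length τ)

/-- The posterior `μ(s | æ_{<t}, π_{t:m})` over the hidden state given the policy event. -/
def condSPev (μ : Env S A E m) (π : List (A × E) → A) (s : S) (h : List (A × E)) : ℝ :=
  μ.evPS s (fun τ => ExtendsH h τ ∧ FollowsFrom π h.length τ) /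
    μ.evP (fun τ => ExtendsH h τ ∧ FollowsFrom π h.length τ)

/-- The conditional `μ(e_t | s, æ_{<t}, π_{t:m})` given the hidden state and the
policy event. -/
def condESPev (μ : Env S A E m) (π : List (A × E) → A) (s : S) (h : List (A × E))
    (e : E) : ℝ :=
  μ.evPS s (fun τ => ExtendsH h τ ∧ FollowsFrom π h.length τ ∧ PerAt h.length e τ) /
    μ.evPS s (fun τ => ExtendsH h τ ∧ FollowsFrom π h.length τ)

/-- The conditional `μ(e_t | æ_{<t}a_t, π_{t+1:m})` used in the recursive definition of
the policy-evidential value. -/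
def condPevA (μ : Env S A E m) (π : List (A × E) → A) (h : List (A × E)) (a : A)
    (e : E) : ℝ :=
  μ.evP (fun τ => ExtendsH (h ++ [(a, e)]) τ ∧ FollowsFrom π (h.length + 1) τ) /
    μ.evP (fun τ => ExtendsH h τ ∧ ActAt h.length a τ ∧ FollowsFrom π (h.length + 1) τ)

/-! ## Value functions

The recursions are driven by the fuel `n`, the number of remaining time steps: the
value of a history `æ_{<t}` (for `t ≤ m + 1`) or of `æ_{<t}a_t` (for `t ≤ m`) within
lifetime `m` uses fuel `n = m - (t - 1)`, and the value is `0` for `t > m`. -/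

/-- The action-evidential value `V^{aev,π}_{μ}(æ_{<t}a_t)` (with `n = m - t + 1`):
`V^{aev,π}(æ_{<t}a_t) = ∑_{e_t} μ(e_t | æ_{<t}a_t) (u(e_t) + V^{aev,π}(æ_{<t}a_te_t))`. -/
def VaevA (μ : Env S A E m) (u : E → ℝ) (π : List (A × E) → A) :
    ℕ → List (A × E) → A → ℝ
  | 0, _, _ => 0
  | n + 1, h, a =>
    ∑ e, μ.condE h a e * (u e + μ.VaevA u π n (h ++ [(a, e)]) (π (h ++ [(a, e)])))

/-- The action-evidential value of a history, `V^{aev,π}(æ_{<t}) = V^{aev,π}(æ_{<t}π(æ_{<t}))`. -/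
def Vaev (μ : Env S A E m) (u : E → ℝ) (π : List (A × E) → A) (n : ℕ)
    (h : List (A × E)) : ℝ :=
  μ.VaevA u π n h (π h)

/-- The policy-evidential value `V^{pev,π}_{μ}(æ_{<t}a_t)` (with `n = m - t + 1`):
`V^{pev,π}(æ_{<t}a_t) = ∑_{e_t} μ(e_t | æ_{<t}a_t, π_{t+1:m}) (u(e_t) + V^{pev,π}(æ_{<t}a_te_t))`. -/
def VpevA (μ : Env S A E m) (u : E → ℝ) (π : List (A × E) → A) :
    ℕ → List (A × E) → A → ℝ
  | 0, _, _ => 0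
  | n + 1, h, a =>
    ∑ e, μ.condPevA π h a e * (u e + μ.VpevA u π n (h ++ [(a, e)]) (π (h ++ [(a, e)])))

/-- The policy-evidential value of a history. -/
def Vpev (μ : Env S A E m) (u : E → ℝ) (π : List (A × E) → A) (n : ℕ)
    (h : List (A × E)) : ℝ :=
  μ.VpevA u π n h (π h)

/-- The causal value `V^{cau,π}_{μ}(æ_{<t}a_t)` (with `n = m - t + 1`):
`V^{cau,π}(æ_{<t}a_t) = ∑_{e_t} μ(e_t | æ_{<t}, do(a_t)) (u(e_t) + V^{cau,π}(æ_{<t}a_te_t))`. -/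
def VcauA (μ : Env S A E m) (u : E → ℝ) (π : List (A × E) → A) :
    ℕ → List (A × E) → A → ℝ
  | 0, _, _ => 0
  | n + 1, h, a =>
    ∑ e, μ.condDo h a e * (u e + μ.VcauA u π n (h ++ [(a, e)]) (π (h ++ [(a, e)])))

/-- The causal value of a history. -/
def Vcau (μ : Env S A E m) (u : E → ℝ) (π : List (A × E) → A) (n : ℕ)
    (h : List (A × E)) : ℝ :=
  μ.VcauA u π n h (π h)

/-! ## Products of one-step conditionals, for the iterative forms -/

/-- `∏_{i=t}^{k} μ(e_i | æ_{<i}a_i)` with `a_i := π(æ_{<i})`, the percepts `e_{t:k}`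
being given by the list `es`. -/
def prodAev (μ : Env S A E m) (π : List (A × E) → A) : List (A × E) → List E → ℝ
  | _, [] => 1
  | h, e :: es => μ.condE h (π h) e * μ.prodAev π (h ++ [(π h, e)]) es

/-- `∏_{i=t}^{k} μ(e_i | æ_{<i}, π_{i:m})`. -/
def prodPev (μ : Env S A E m) (π : List (A × E) → A) : List (A × E) → List E → ℝ
  | _, [] => 1
  | h, e :: es => μ.condPev π h e * μ.prodPev π (h ++ [(π h, e)]) es

/-- `∏_{i=t}^{k} μ(e_i | æ_{<i}, do(a_i))` with `a_i := π(æ_{<i})`. -/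
def prodCau (μ : Env S A E m) (π : List (A × E) → A) : List (A × E) → List E → ℝ
  | _, [] => 1
  | h, e :: es => μ.condDo h (π h) e * μ.prodCau π (h ++ [(π h, e)]) es

/-- `∏_{i=t}^{k} ∑_{s} μ(s | æ_{<i}) μ(e_i | s, æ_{<i}a_i)` with `a_i := π(æ_{<i})`. -/
def prodCauX (μ : Env S A E m) (π : List (A × E) → A) : List (A × E) → List E → ℝ
  | _, [] => 1
  | h, e :: es =>
    (∑ s, μ.condS s h * μ.condESA s h (π h) e) * μ.prodCauX π (h ++ [(π h, e)]) es

end Env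

end

/-! ## The Newcomb-with-precommitment environment (lifetime m = 2, ε = 0.01)

Hidden states `E` (opaque box empty) / `F` (full), prior 1/2 each. At step 1 the agent
signs a binding contract (`S := B₁`, percept `C`, utility −300000) or not (`N := B₂`,
percept `p0`, utility 0), each with probability 1/2. At step 2 the agent one-boxes
(`B₁`) or two-boxes (`B₂`). If the agent signed, the prediction is updated to
one-boxing, `μ(B₁ | s, SC) = 0.99` for both states, and the final utility is 1000000
for `B₁` and 999000 for `B₂` (1001000 minus the 2000 contract penalty) regardless of
the state. If the agent did not sign, `μ(B₁ | F, N0) = 0.99` and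
`μ(B₁ | E, N0) = 0.01`, with final utilities 0 for `(E, B₁)`, 1000 for `(E, B₂)`,
1000000 for `(F, B₁)` and 1001000 for `(F, B₂)`. -/

/-- Hidden states: opaque box empty (`E`) or full (`F`). -/
inductive PSt | E | F
  deriving DecidableEq

instance : Fintype PSt :=
  ⟨{PSt.E, PSt.F}, fun x => by cases x <;> simp⟩

/-- Actions: `B₁` (step 1: sign the contract; step 2: one-box), `B₂` (step 1: refuse;
step 2: two-box). -/
inductive PAct | B₁ | B₂
  deriving DecidableEq

instance : Fintype PAct :=
  ⟨{PAct.B₁, PAct.B₂}, fun x => by cases x <;> simp⟩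

/-- Percepts: contract signed (`C`), nothing (`p0`), and the payoffs. -/
inductive PPer | C | p0 | O0 | OT | OM | OMT | OMm
  deriving DecidableEq

instance : Fintype PPer :=
  ⟨{PPer.C, PPer.p0, PPer.O0, PPer.OT, PPer.OM, PPer.OMT, PPer.OMm},
    fun x => by cases x <;> simp⟩

/-- The action factors `μ(a_t | s, æ_{<t})`: uniform at step 1; after signing, both
states predict one-boxing with probability 0.99; after refusing, the prediction has
accuracy 0.99. -/
noncomputable def npPa : PSt → List (PAct × PPer) → PAct → ℝ
  | _, [], _ => 1 / 2
  | _, (PAct.B₁, _) :: _, PAct.B₁ => 0.99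
  | _, (PAct.B₁, _) :: _, PAct.B₂ => 0.01
  | PSt.F, _, PAct.B₁ => 0.99
  | PSt.F, _, PAct.B₂ => 0.01
  | PSt.E, _, PAct.B₁ => 0.01
  | PSt.E, _, PAct.B₂ => 0.99

/-- The percept factors `μ(e_t | s, æ_{<t}a_t)`. -/
noncomputable def npPe : PSt → List (PAct × PPer) → PAct → PPer → ℝ
  | _, [], PAct.B₁, PPer.C => 1
  | _, [], PAct.B₁, _ => 0
  | _, [], PAct.B₂, PPer.p0 => 1
  | _, [], PAct.B₂, _ => 0
  | _, (PAct.B₁, _) :: _, PAct.B₁, PPer.OM => 1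
  | _, (PAct.B₁, _) :: _, PAct.B₁, _ => 0
  | _, (PAct.B₁, _) :: _, PAct.B₂, PPer.OMm => 1
  | _, (PAct.B₁, _) :: _, PAct.B₂, _ => 0
  | PSt.E, _, PAct.B₁, PPer.O0 => 1
  | PSt.E, _, PAct.B₂, PPer.OT => 1
  | PSt.F, _, PAct.B₁, PPer.OM => 1
  | PSt.F, _, PAct.B₂, PPer.OMT => 1
  | _, _, _, _ => 0

/-- The Newcomb-with-precommitment environment model, lifetime `m = 2`. -/
noncomputable def npEnv : Env PSt PAct PPer 2 where
  prior := fun _ => 1 / 2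
  pa := npPa
  pe := npPe
  prior_nonneg := by intro s; norm_num
  prior_sum := by
    rw [show (Finset.univ : Finset PSt) = {PSt.E, PSt.F} by decide,
      Finset.sum_insert (by decide), Finset.sum_singleton]
    norm_num
  pa_nonneg := by intro s h a; unfold npPa; split <;> norm_num
  pa_sum := by
    intro s h hlen
    rw [show (Finset.univ : Finset PAct) = {PAct.B₁, PAct.B₂} by decide,
      Finset.sum_insert (by decide), Finset.sum_singleton]
    rcases h with _ | ⟨⟨a1, e1⟩, _ | ⟨p, t⟩⟩
    · cases s <;> norm_num [npPa]
    · cases s <;> cases a1 <;> cases e1 <;> norm_num [npPa]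
    · simp only [List.length_cons] at hlen; omega
  pe_nonneg := by intro s h a e; unfold npPe; split <;> norm_num
  pe_sum := by
    intro s h a hlen
    rw [show (Finset.univ : Finset PPer) =
        {PPer.C, PPer.p0, PPer.O0, PPer.OT, PPer.OM, PPer.OMT, PPer.OMm} by decide,
      Finset.sum_insert (by decide), Finset.sum_insert (by decide),
      Finset.sum_insert (by decide), Finset.sum_insert (by decide),
      Finset.sum_insert (by decide), Finset.sum_insert (by decide),
      Finset.sum_singleton]
    rcases h with _ | ⟨⟨a1, e1⟩, _ | ⟨p, t⟩⟩
    · cases s <;> cases a <;> norm_num [npPe]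
    · cases s <;> cases a <;> cases a1 <;> cases e1 <;> norm_num [npPe]
    · simp only [List.length_cons] at hlen; omega
  action_pos := by
    intro s h a hlen hpos
    unfold npPa; split <;> norm_num

/-- The utility function of the Newcomb-with-precommitment problem. -/
noncomputable def npU : PPer → ℝ
  | PPer.C => -300000
  | PPer.p0 => 0
  | PPer.O0 => 0
  | PPer.OT => 1000
  | PPer.OM => 1000000
  | PPer.OMT => 1001000
  | PPer.OMm => 999000

/-- The signing one-boxer: sign the contract, then one-box. -/
def npS1 : List (PAct × PPer) → PAct := fun _ => PAct.B₁

/-- The signing two-boxer: sign the contract, then two-box. -/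
def npS2 : List (PAct × PPer) → PAct
  | [] => PAct.B₁
  | _ => PAct.B₂

/-- The refusing one-boxer: don't sign, then one-box. -/
def npR1 : List (PAct × PPer) → PAct
  | [] => PAct.B₂
  | _ => PAct.B₁

/-- The refusing two-boxer: don't sign, then two-box. -/
def npR2 : List (PAct × PPer) → PAct := fun _ => PAct.B₂

lemma sumS (f : PSt → ℝ) : ∑ s, f s = f .E + f .F := by
  rw [show (Finset.univ : Finset PSt) = {PSt.E, PSt.F} by decide,
    Finset.sum_insert (by decide), Finset.sum_singleton]

lemma sumA (f : PAct → ℝ) : ∑ a, f a = f .B₁ + f .B₂ := by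
  rw [show (Finset.univ : Finset PAct) = {PAct.B₁, PAct.B₂} by decide,
    Finset.sum_insert (by decide), Finset.sum_singleton]

lemma sumE7 (f : PPer → ℝ) :
    ∑ e, f e = f .C + f .p0 + f .O0 + f .OT + f .OM + f .OMT + f .OMm := by
  rw [show (Finset.univ : Finset PPer) =
      {PPer.C, PPer.p0, PPer.O0, PPer.OT, PPer.OM, PPer.OMT, PPer.OMm} by decide]
  repeat rw [Finset.sum_insert (by decide)]
  rw [Finset.sum_singleton]; ring

section evPlemmas

lemma ofFn_two (τ : Fin 2 → PAct × PPer) : List.ofFn τ = [τ 0, τ 1] := by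
  simp [List.ofFn_succ]

lemma extendsH2_iff (p q : PAct × PPer) (τ : Fin 2 → PAct × PPer) :
    ExtendsH [p, q] τ ↔ τ = ![p, q] := by
  unfold ExtendsH
  rw [ofFn_two]
  constructor
  · intro h
    simp only [List.length_cons, List.length_nil, List.take_succ_cons, List.take_zero,
      List.cons.injEq, and_true] at h
    funext i; fin_cases i <;> simp [h.1, h.2]
  · rintro rfl; simp

lemma followsFrom2_iff (π : List (PAct × PPer) → PAct) (τ : Fin 2 → PAct × PPer) :
    FollowsFrom π 2 τ ↔ True := by
  simp only [iff_true]
  intro i hi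
  exact absurd i.isLt (by omega)

lemma followsFrom1_iff (π : List (PAct × PPer) → PAct) (τ : Fin 2 → PAct × PPer) :
    FollowsFrom π 1 τ ↔ (τ 1).1 = π [τ 0] := by
  unfold FollowsFrom
  constructor
  · intro h
    have := h 1 (by norm_num)
    rwa [ofFn_two] at this
  · intro h i hi
    have h2 := i.isLt
    have : (i : ℕ) = 1 := by omega
    have hi1 : i = 1 := Fin.ext this
    subst hi1
    rwa [ofFn_two]

lemma extendsH1_iff (p : PAct × PPer) (τ : Fin 2 → PAct × PPer) :
    ExtendsH [p] τ ↔ τ 0 = p := by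
  unfold ExtendsH
  rw [ofFn_two]
  simp

lemma extendsH0_iff (τ : Fin 2 → PAct × PPer) : ExtendsH ([] : List (PAct × PPer)) τ ↔ True := by
  simp [ExtendsH]

lemma actAt_iff (k : ℕ) (hk : k < 2) (a : PAct) (τ : Fin 2 → PAct × PPer) :
    ActAt k a τ ↔ (τ ⟨k, hk⟩).1 = a := by
  unfold ActAt
  exact ⟨fun h => h hk, fun h _ => h⟩

variable (μ : Env PSt PAct PPer 2) (π : List (PAct × PPer) → PAct)

open Classical in
lemma evP_point (Q : (Fin 2 → PAct × PPer) → Prop) (c : Fin 2 → PAct × PPer)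
    (hQ : ∀ τ, Q τ ↔ τ = c) : μ.evP Q = μ.probH (List.ofFn c) := by
  unfold Env.evP
  simp only [hQ]
  simp [Finset.sum_ite_eq' Finset.univ c (fun τ => μ.probH (List.ofFn τ))]

open Classical in
lemma evP_fiber1 (Q : (Fin 2 → PAct × PPer) → Prop) (p : PAct × PPer) (a' : PAct)
    (hQ : ∀ τ, Q τ ↔ (τ 0 = p ∧ (τ 1).1 = a')) :
    μ.evP Q = ∑ e', μ.probH [p, (a', e')] := by
  unfold Env.evP
  simp only [hQ]
  rw [← Finset.sum_filter]
  rw [show Finset.univ.filter (fun τ : Fin 2 → PAct × PPer => τ 0 = p ∧ (τ 1).1 = a')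
      = Finset.image (fun e' : PPer => ![p, (a', e')]) Finset.univ from by
    ext τ
    simp only [Finset.mem_filter, Finset.mem_univ, true_and, Finset.mem_image]
    constructor
    · rintro ⟨h0, h1⟩
      refine ⟨(τ 1).2, ?_⟩
      funext i; fin_cases i
      · simpa using h0.symm
      · simp only [Fin.isValue, Matrix.cons_val_one, Matrix.head_cons]
        rw [← h1]
        exact Prod.mk.eta.symm
    · rintro ⟨e', rfl⟩
      constructor <;> simp]
  rw [Finset.sum_image (by
    intro x _ y _ h
    have h1 := congrFun h 1
    simp only [Fin.isValue, Matrix.cons_val_one, Matrix.head_cons, Matrix.cons_val_zero,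
      Prod.mk.injEq] at h1
    exact h1.2)]
  refine Finset.sum_congr rfl fun e' _ => ?_
  rw [ofFn_two]
  simp

open Classical in
lemma evP_fiber0 (Q : (Fin 2 → PAct × PPer) → Prop) (a : PAct)
    (hQ : ∀ τ, Q τ ↔ ((τ 0).1 = a ∧ (τ 1).1 = π [τ 0])) :
    μ.evP Q = ∑ e, ∑ e', μ.probH [(a, e), (π [(a, e)], e')] := by
  unfold Env.evP
  simp only [hQ]
  rw [← Finset.sum_filter]
  rw [show Finset.univ.filter (fun τ : Fin 2 → PAct × PPer =>
        (τ 0).1 = a ∧ (τ 1).1 = π [τ 0])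
      = Finset.image (fun x : PPer × PPer => ![(a, x.1), (π [(a, x.1)], x.2)])
          Finset.univ from by
    ext τ
    simp only [Finset.mem_filter, Finset.mem_univ, true_and, Finset.mem_image]
    constructor
    · rintro ⟨h0, h1⟩
      refine ⟨⟨(τ 0).2, (τ 1).2⟩, ?_⟩
      funext i; fin_cases i
      · simp only [Fin.isValue, Matrix.cons_val_zero]
        rw [← h0]
        exact Prod.mk.eta.symm
      · simp only [Fin.isValue, Matrix.cons_val_one, Matrix.head_cons]
        have ht0 : τ 0 = (a, (τ 0).2) := by rw [← h0]
        rw [← ht0, ← h1]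
        exact Prod.mk.eta.symm
    · rintro ⟨x, rfl⟩
      constructor <;> simp]
  rw [Finset.sum_image (by
    intro x _ y _ h
    have h0 := congrFun h 0
    have h1 := congrFun h 1
    simp only [Fin.isValue, Matrix.cons_val_zero, Matrix.cons_val_one, Matrix.head_cons,
      Prod.mk.injEq, true_and] at h0 h1
    have h2 : x.2 = y.2 := by rw [h0] at h1; simpa using h1
    exact Prod.ext_iff.mpr ⟨h0, h2⟩)]
  rw [Fintype.sum_prod_type]
  refine Finset.sum_congr rfl fun e _ => Finset.sum_congr rfl fun e' _ => ?_
  rw [ofFn_two]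
  simp

end evPlemmas

section condPevA

variable (μ : Env PSt PAct PPer 2) (π : List (PAct × PPer) → PAct)

lemma condPevA_nil (a : PAct) (e : PPer) :
    μ.condPevA π [] a e =
      (∑ e', μ.probH [(a, e), (π [(a, e)], e')]) /
        (∑ e0, ∑ e', μ.probH [(a, e0), (π [(a, e0)], e')]) := by
  unfold Env.condPevA
  rw [evP_fiber1 μ _ (a, e) (π [(a, e)]) (fun τ => by
    simp only [List.nil_append, List.length_nil, zero_add]
    rw [extendsH1_iff, followsFrom1_iff]
    constructor
    · rintro ⟨h0, h1⟩
      rw [h0] at h1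
      exact ⟨h0, h1⟩
    · rintro ⟨h0, h1⟩
      exact ⟨h0, by rwa [h0]⟩)]
  rw [evP_fiber0 μ π _ a (fun τ => by
    simp only [List.length_nil, zero_add]
    rw [extendsH0_iff, actAt_iff 0 (by norm_num), followsFrom1_iff, true_and]
    exact Iff.rfl)]

lemma condPevA_one (p : PAct × PPer) (a' : PAct) (e' : PPer) :
    μ.condPevA π [p] a' e' =
      μ.probH [p, (a', e')] / (∑ e'', μ.probH [p, (a', e'')]) := by
  unfold Env.condPevA
  rw [evP_point μ _ ![p, (a', e')] (fun τ => by
    simp only [List.cons_append, List.nil_append, List.length_cons, List.length_nil, zero_add]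
    rw [extendsH2_iff, followsFrom2_iff, and_true])]
  rw [evP_fiber1 μ _ p a' (fun τ => by
    simp only [List.length_cons, List.length_nil, zero_add]
    rw [extendsH1_iff, actAt_iff 1 (by norm_num), followsFrom2_iff, and_true]
    exact Iff.rfl)]
  rw [ofFn_two]
  simp

end condPevA


set_option maxHeartbeats 4000000 in
/-- **Newcomb with precommitment** (ε = 0.01): from the empty history, the
action-evidential and policy-evidential values of the four policies (signing one-boxer,
signing two-boxer, refusing one-boxer, refusing two-boxer) are both equal to
700000, 699000, 990000, 11000 respectively, and their causal values are
700000, 699000, 500000, 501000. Hence the refusing one-boxer uniquely maximizes both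
evidential values (SAEDT and SPEDT refuse the contract and one-box), while the signing
one-boxer uniquely maximizes the causal value (SCDT signs the contract and one-boxes). -/
theorem newcomb_with_precommitment :
    (npEnv.Vaev npU npS1 2 [] = 700000 ∧
     npEnv.Vaev npU npS2 2 [] = 699000 ∧
     npEnv.Vaev npU npR1 2 [] = 990000 ∧
     npEnv.Vaev npU npR2 2 [] = 11000) ∧
    (npEnv.Vpev npU npS1 2 [] = 700000 ∧
     npEnv.Vpev npU npS2 2 [] = 699000 ∧
     npEnv.Vpev npU npR1 2 [] = 990000 ∧
     npEnv.Vpev npU npR2 2 [] = 11000) ∧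
    (npEnv.Vcau npU npS1 2 [] = 700000 ∧
     npEnv.Vcau npU npS2 2 [] = 699000 ∧
     npEnv.Vcau npU npR1 2 [] = 500000 ∧
     npEnv.Vcau npU npR2 2 [] = 501000) ∧
    (npEnv.Vaev npU npS1 2 [] < npEnv.Vaev npU npR1 2 [] ∧
     npEnv.Vaev npU npS2 2 [] < npEnv.Vaev npU npR1 2 [] ∧
     npEnv.Vaev npU npR2 2 [] < npEnv.Vaev npU npR1 2 []) ∧
    (npEnv.Vpev npU npS1 2 [] < npEnv.Vpev npU npR1 2 [] ∧
     npEnv.Vpev npU npS2 2 [] < npEnv.Vpev npU npR1 2 [] ∧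
     npEnv.Vpev npU npR2 2 [] < npEnv.Vpev npU npR1 2 []) ∧
    (npEnv.Vcau npU npS2 2 [] < npEnv.Vcau npU npS1 2 [] ∧
     npEnv.Vcau npU npR1 2 [] < npEnv.Vcau npU npS1 2 [] ∧
     npEnv.Vcau npU npR2 2 [] < npEnv.Vcau npU npS1 2 []) := by
  have a1 : npEnv.Vaev npU npS1 2 [] = 700000 := by
    simp only [Env.Vaev, Env.VaevA, Env.condE, Env.probH, Env.probHA, Env.hw,
      wSuf, sumS, sumA, sumE7, npEnv, npS1, npPa, npPe, npU,
      List.nil_append, List.cons_append]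
    norm_num
  have a2 : npEnv.Vaev npU npS2 2 [] = 699000 := by
    simp only [Env.Vaev, Env.VaevA, Env.condE, Env.probH, Env.probHA, Env.hw,
      wSuf, sumS, sumA, sumE7, npEnv, npS2, npPa, npPe, npU,
      List.nil_append, List.cons_append]
    norm_num
  have a3 : npEnv.Vaev npU npR1 2 [] = 990000 := by
    simp only [Env.Vaev, Env.VaevA, Env.condE, Env.probH, Env.probHA, Env.hw,
      wSuf, sumS, sumA, sumE7, npEnv, npR1, npPa, npPe, npU,
      List.nil_append, List.cons_append]
    norm_num
  have a4 : npEnv.Vaev npU npR2 2 [] = 11000 := by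
    simp only [Env.Vaev, Env.VaevA, Env.condE, Env.probH, Env.probHA, Env.hw,
      wSuf, sumS, sumA, sumE7, npEnv, npR2, npPa, npPe, npU,
      List.nil_append, List.cons_append]
    norm_num
  have p1 : npEnv.Vpev npU npS1 2 [] = 700000 := by
    simp only [Env.Vpev, Env.VpevA, List.nil_append, condPevA_nil, condPevA_one,
      Env.probH, Env.hw, wSuf, sumS, sumA, sumE7, npEnv, npS1, npPa, npPe, npU,
      List.cons_append, add_zero, mul_zero]
    norm_num
  have p2 : npEnv.Vpev npU npS2 2 [] = 699000 := by
    simp only [Env.Vpev, Env.VpevA, List.nil_append, condPevA_nil, condPevA_one,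
      Env.probH, Env.hw, wSuf, sumS, sumA, sumE7, npEnv, npS2, npPa, npPe, npU,
      List.cons_append, add_zero, mul_zero]
    norm_num
  have p3 : npEnv.Vpev npU npR1 2 [] = 990000 := by
    simp only [Env.Vpev, Env.VpevA, List.nil_append, condPevA_nil, condPevA_one,
      Env.probH, Env.hw, wSuf, sumS, sumA, sumE7, npEnv, npR1, npPa, npPe, npU,
      List.cons_append, add_zero, mul_zero]
    norm_num
  have p4 : npEnv.Vpev npU npR2 2 [] = 11000 := by
    simp only [Env.Vpev, Env.VpevA, List.nil_append, condPevA_nil, condPevA_one,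
      Env.probH, Env.hw, wSuf, sumS, sumA, sumE7, npEnv, npR2, npPa, npPe, npU,
      List.cons_append, add_zero, mul_zero]
    norm_num
  have c1 : npEnv.Vcau npU npS1 2 [] = 700000 := by
    simp only [Env.Vcau, Env.VcauA, Env.condDo, Env.doNum, Env.doDen,
      Env.doJoint, Env.probH, Env.hw, wSuf, sumS, sumA, sumE7, npEnv, npS1,
      npPa, npPe, npU, List.nil_append, List.cons_append]
    norm_num
  have c2 : npEnv.Vcau npU npS2 2 [] = 699000 := by
    simp only [Env.Vcau, Env.VcauA, Env.condDo, Env.doNum, Env.doDen,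
      Env.doJoint, Env.probH, Env.hw, wSuf, sumS, sumA, sumE7, npEnv, npS2,
      npPa, npPe, npU, List.nil_append, List.cons_append]
    norm_num
  have c3 : npEnv.Vcau npU npR1 2 [] = 500000 := by
    simp only [Env.Vcau, Env.VcauA, Env.condDo, Env.doNum, Env.doDen,
      Env.doJoint, Env.probH, Env.hw, wSuf, sumS, sumA, sumE7, npEnv, npR1,
      npPa, npPe, npU, List.nil_append, List.cons_append]
    norm_num
  have c4 : npEnv.Vcau npU npR2 2 [] = 501000 := by
    simp only [Env.Vcau, Env.VcauA, Env.condDo, Env.doNum, Env.doDen,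
      Env.doJoint, Env.probH, Env.hw, wSuf, sumS, sumA, sumE7, npEnv, npR2,
      npPa, npPe, npU, List.nil_append, List.cons_append]
    norm_num
  refine ⟨⟨a1, a2, a3, a4⟩, ⟨p1, p2, p3, p4⟩, ⟨c1, c2, c3, c4⟩, ?_, ?_, ?_⟩
  · rw [a1, a2, a3, a4]; norm_num
  · rw [p1, p2, p3, p4]; norm_num
  · rw [c1, c2, c3, c4]; norm_num
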